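/- Every weakly graphic homogeneous relation of local congruence 2 is modular quotient. -/
import Mathlib


/-- `H` is a homogeneous relation: for each `x`, the binary relation
`H x · ·` is an equivalence relation on the elements distinct from `x`. -/
def IsHomRel {X : Type*} (H : X → X → X → Prop) : Prop :=
  (∀ x y, y ≠ x → H x y y) ∧
  (∀ x y z, y ≠ x → z ≠ x → H x y z → H x z y) ∧
  (∀ x y z w, y ≠ x → z ≠ x → w ≠ x → H x y z → H x z w → H x y w)

/-- `M` is a homogeneous module of `H`. -/
def IsModule {X : Type*} (H : X → X → X → Prop) (M : Set X) : Prop :=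
  ∀ m ∈ M, ∀ m' ∈ M, ∀ x ∉ M, H x m m'

/-- Two sets overlap. -/
def Overlap {X : Type*} (A B : Set X) : Prop :=
  (A ∩ B).Nonempty ∧ (A \ B).Nonempty ∧ (B \ A).Nonempty

def WeaklyGraphic {X : Type*} (H : X → X → X → Prop) : Prop :=
  ∀ x y z : X, x ≠ y → x ≠ z → y ≠ z → H y x z → H z x y → H x y z

/-- Each `H_x` has at most two equivalence classes. -/
def LocalCongruenceAtMostTwo {X : Type*} (H : X → X → X → Prop) : Prop :=
  ∀ x a b c : X, a ≠ x → b ≠ x → c ≠ x → H x a b ∨ H x a c ∨ H x b c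

def ModularQuotient {X : Type*} (H : X → X → X → Prop) : Prop :=
  ∀ M : Set X, IsModule H M →
    ∀ x ∈ M, ∀ y ∈ M, ∀ s ∉ M, ∀ t ∉ M, (H x s t ↔ H y s t)

lemma aux_one_dir {X : Type*} (H : X → X → X → Prop)
    (hH : IsHomRel H) (hwg : WeaklyGraphic H) (hlc : LocalCongruenceAtMostTwo H)
    {M : Set X} (hM : IsModule H M) {x y s t : X}
    (hx : x ∈ M) (hy : y ∈ M) (hs : s ∉ M) (ht : t ∉ M)
    (hxst : H x s t) : H y s t := by
  obtain ⟨hrefl, hsym, htrans⟩ := hH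
  have hsx : s ≠ x := fun h => hs (h ▸ hx)
  have htx : t ≠ x := fun h => ht (h ▸ hx)
  have hsy : s ≠ y := fun h => hs (h ▸ hy)
  have hty : t ≠ y := fun h => ht (h ▸ hy)
  by_cases hxy : x = y
  · exact hxy ▸ hxst
  by_cases hst : s = t
  · exact hst ▸ hrefl y s hsy
  have hxy' : x ≠ y := hxy
  have h1 : H s x y := hM x hx y hy s hs
  have h2 : H t x y := hM x hx y hy t ht
  by_contra hns
  rcases hlc y s t x hsy hty hxy' with h | h | h
  · exact hns h
  · -- H y s x
    have hyxs : H y x s := hsym y s x hsy hxy' h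
    have hxys : H x y s := hwg x y s hxy' (Ne.symm hsx) (Ne.symm hsy) hyxs h1
    have hxyt : H x y t := htrans x y s t (Ne.symm hxy') hsx htx hxys hxst
    have htyx : H t y x := hsym t x y (Ne.symm htx) (Ne.symm hty) h2
    have hyxt : H y x t := hwg y x t (Ne.symm hxy') (Ne.symm hty) (Ne.symm htx) hxyt htyx
    exact hns (htrans y s x t hsy hxy' hty h hyxt)
  · -- H y t x
    have hxts : H x t s := hsym x s t hsx htx hxst
    have hyxt : H y x t := hsym y t x hty hxy' h
    have hxyt : H x y t := hwg x y t hxy' (Ne.symm htx) (Ne.symm hty) hyxt h2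
    have hxys : H x y s := htrans x y t s (Ne.symm hxy') htx hsx hxyt hxts
    have hsyx : H s y x := hsym s x y (Ne.symm hsx) (Ne.symm hsy) h1
    have hyxs : H y x s := hwg y x s (Ne.symm hxy') (Ne.symm hsy) (Ne.symm hsx) hxys hsyx
    have : H y t s := htrans y t x s hty hxy' hsy h hyxs
    exact hns (hsym y t s hty hsy this)

theorem stmt_11 {X : Type*} [Fintype X] (H : X → X → X → Prop)
    (hH : IsHomRel H) (hwg : WeaklyGraphic H)
    (hlc : LocalCongruenceAtMostTwo H) : ModularQuotient H := by
  intro M hM x hx y hy s hs t ht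
  exact ⟨aux_one_dir H hH hwg hlc hM hx hy hs ht,
    aux_one_dir H hH hwg hlc hM hy hx hs ht⟩
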